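/- arXiv:2501.09435 — 10 statements merged into one kernel-verified Lean document; each statement's English description precedes it below -/
import Mathlib

section
/- The Diophantine equation x₁² + x₂² + 1 = k·x₁·x₂ has a positive integer solution (x₁, x₂) if and only if k = 3. -/
theorem aux_vieta (k : ℕ) : ∀ n, ∀ x₁ x₂ : ℕ, x₁ + x₂ ≤ n → 0 < x₁ → 0 < x₂ →
    x₁ ≤ x₂ → x₁ ^ 2 + x₂ ^ 2 + 1 = k * x₁ * x₂ → k = 3 := by
  intro n
  induction n with
  | zero => intro x₁ x₂ h h1 h2 _ _; omega
  | succ n ih =>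
    intro x₁ x₂ hn h1 h2 hle heq
    rcases eq_or_lt_of_le hle with rfl | hlt
    · -- equal case: x₁ = x₂
      have hd : x₁ ∣ 1 := by
        have h3 : x₁ ∣ k * x₁ * x₁ := ⟨k * x₁, by ring⟩
        have h4 : x₁ ∣ x₁ ^ 2 + x₁ ^ 2 := ⟨2 * x₁, by ring⟩
        have := Nat.dvd_sub h3 h4
        rw [← heq] at this
        simpa using this
      have hx1 : x₁ = 1 := Nat.eq_one_of_dvd_one hd
      subst hx1
      omega
    · -- strict case: Vieta jump
      have hkx : x₂ < k * x₁ := by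
        have h5 : x₂ * x₂ < k * x₁ * x₂ := by nlinarith
        exact Nat.lt_of_mul_lt_mul_right h5
      set y := k * x₁ - x₂ with hy_def
      have hy : x₂ + y = k * x₁ := by omega
      have hxy : x₂ * y = x₁ ^ 2 + 1 := by nlinarith [hy, heq]
      have hy0 : 0 < y := by
        rcases Nat.eq_zero_or_pos y with h0 | h0
        · rw [h0, Nat.mul_zero] at hxy; omega
        · exact h0
      have hylt : y ≤ x₁ := by nlinarith [hxy]
      have heq2 : y ^ 2 + x₁ ^ 2 + 1 = k * y * x₁ := by nlinarith [hxy, hy]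
      exact ih y x₁ (by omega) hy0 h1 hylt heq2

theorem stmt_0 (k : ℕ) :
    (∃ x₁ x₂ : ℕ, 0 < x₁ ∧ 0 < x₂ ∧ x₁ ^ 2 + x₂ ^ 2 + 1 = k * x₁ * x₂) ↔ k = 3 := by
  constructor
  · rintro ⟨x₁, x₂, h1, h2, heq⟩
    rcases le_total x₁ x₂ with h | h
    · exact aux_vieta k (x₁ + x₂) x₁ x₂ le_rfl h1 h2 h heq
    · exact aux_vieta k (x₁ + x₂) x₂ x₁ (by omega) h2 h1 h (by linarith [heq]; )
  · rintro rfl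
    exact ⟨1, 1, one_pos, one_pos, by norm_num⟩
end

section
/- The Diophantine equation x₁² + x₂² + x₃² = k·x₁·x₂·x₃ has a positive integer solution (x₁, x₂, x₃) if and only if k = 1 or k = 3. -/
-- No solutions when k is even (infinite descent via mod 4 analysis)
lemma no_even_k : ∀ a : ℕ, ∀ b c k : ℕ, 0 < a → 0 < b → 0 < c → 2 ∣ k →
    a ^ 2 + b ^ 2 + c ^ 2 = k * a * b * c → False := by
  intro a
  induction a using Nat.strong_induction_on with
  | _ a ih =>
    intro b c k ha hb hc hk h
    obtain ⟨k', rfl⟩ := hk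
    have claim : ∀ x y z w : ZMod 4, x ^ 2 + y ^ 2 + z ^ 2 = 2 * w * x * y * z →
        ¬(x = 1 ∨ x = 3) ∧ ¬(y = 1 ∨ y = 3) ∧ ¬(z = 1 ∨ z = 3) := by decide
    have hz : ((a : ZMod 4)) ^ 2 + (b : ZMod 4) ^ 2 + (c : ZMod 4) ^ 2
        = 2 * (k' : ZMod 4) * a * b * c := by
      have := congrArg (Nat.cast : ℕ → ZMod 4) h
      push_cast at this
      linear_combination this
    obtain ⟨h1, h2, h3⟩ := claim a b c k' hz
    have hmod : ∀ n : ℕ, ¬((n : ZMod 4) = 1 ∨ (n : ZMod 4) = 3) → n % 2 = 0 := by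
      intro n hn
      by_contra hne
      have h4 : n % 4 = 1 ∨ n % 4 = 3 := by omega
      have hcast : ((n % 4 : ℕ) : ZMod 4) = (n : ZMod 4) := ZMod.natCast_mod n 4
      rcases h4 with hm | hm <;> rw [hm] at hcast
      · exact hn (Or.inl (by rw [← hcast]; norm_num))
      · exact hn (Or.inr (by rw [← hcast]; norm_num))
    have h2a : 2 ∣ a := Nat.dvd_of_mod_eq_zero (hmod a h1)
    have h2b : 2 ∣ b := Nat.dvd_of_mod_eq_zero (hmod b h2)
    have h2c : 2 ∣ c := Nat.dvd_of_mod_eq_zero (hmod c h3)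
    obtain ⟨α, rfl⟩ := h2a
    obtain ⟨β, rfl⟩ := h2b
    obtain ⟨γ, rfl⟩ := h2c
    have hα : 0 < α := by omega
    have hnew : α ^ 2 + β ^ 2 + γ ^ 2 = (2 * (2 * k')) * α * β * γ := by
      have hInt : ((2 * α : ℕ) : ℤ) ^ 2 + ((2 * β : ℕ) : ℤ) ^ 2 + ((2 * γ : ℕ) : ℤ) ^ 2
          = ((2 * k' : ℕ) : ℤ) * (2 * α : ℕ) * (2 * β : ℕ) * (2 * γ : ℕ) := by exact_mod_cast h
      push_cast at hInt
      have : (α : ℤ) ^ 2 + β ^ 2 + γ ^ 2 = (2 * (2 * k')) * α * β * γ := by linarith [hInt]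
      exact_mod_cast this
    exact ih α (by omega) β γ (2 * (2 * k')) hα (by omega) (by omega) ⟨2 * k', rfl⟩ hnew

theorem stmt_1 (k : ℕ) :
    (∃ x₁ x₂ x₃ : ℕ, 0 < x₁ ∧ 0 < x₂ ∧ 0 < x₃ ∧
      x₁ ^ 2 + x₂ ^ 2 + x₃ ^ 2 = k * x₁ * x₂ * x₃) ↔ k = 1 ∨ k = 3 := by
  constructor
  · rintro ⟨a, b, c, ha, hb, hc, h⟩
    -- k ≠ 0
    have hk0 : k ≠ 0 := by
      rintro rfl
      simp at h
      nlinarith [h, ha, hb, hc]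
    -- k odd
    have hkodd : k % 2 = 1 := by
      rcases Nat.even_or_odd k with he | ho
      · exact absurd h (fun h' => no_even_k a b c k ha hb hc he.two_dvd h')
      · exact Nat.odd_iff.mp ho
    classical
    -- minimal-sum solution
    set Q : ℕ → Prop := fun s => ∃ x y z : ℕ, 0 < x ∧ 0 < y ∧ 0 < z ∧
      x ^ 2 + y ^ 2 + z ^ 2 = k * x * y * z ∧ x + y + z = s with hQdef
    have hQ : Q (a + b + c) := ⟨a, b, c, ha, hb, hc, h, rfl⟩
    have hex : ∃ s, Q s := ⟨_, hQ⟩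
    obtain ⟨a', b', c', ha', hb', hc', h', hsum'⟩ := Nat.find_spec hex
    -- sort the minimal solution
    obtain ⟨x, y, z, hx, hy, hz, hxy, hyz, heq, hsumeq⟩ :
        ∃ x y z : ℕ, 0 < x ∧ 0 < y ∧ 0 < z ∧ x ≤ y ∧ y ≤ z ∧
          x ^ 2 + y ^ 2 + z ^ 2 = k * x * y * z ∧ x + y + z = a' + b' + c' := by
      rcases le_total a' b' with h1 | h1 <;> rcases le_total b' c' with h2 | h2 <;>
        rcases le_total a' c' with h3 | h3
      · exact ⟨a', b', c', ha', hb', hc', h1, h2, h', by omega⟩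
      · exact ⟨a', b', c', ha', hb', hc', h1, h2, h', by omega⟩
      · exact ⟨a', c', b', ha', hc', hb', h3, by omega,
          by rw [show k * a' * c' * b' = k * a' * b' * c' by ring]; linarith [h'], by omega⟩
      · exact ⟨c', a', b', hc', ha', hb', by omega, h1,
          by rw [show k * c' * a' * b' = k * a' * b' * c' by ring]; linarith [h'], by omega⟩
      · exact ⟨b', a', c', hb', ha', hc', h1, h3,
          by rw [show k * b' * a' * c' = k * a' * b' * c' by ring]; linarith [h'], by omega⟩
      · exact ⟨b', c', a', hb', hc', ha', h2, by omega,
          by rw [show k * b' * c' * a' = k * a' * b' * c' by ring]; linarith [h'], by omega⟩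
      · exact ⟨b', a', c', hb', ha', hc', h1, h3,
          by rw [show k * b' * a' * c' = k * a' * b' * c' by ring]; linarith [h'], by omega⟩
      · exact ⟨c', b', a', hc', hb', ha', by omega, by omega,
          by rw [show k * c' * b' * a' = k * a' * b' * c' by ring]; linarith [h'], by omega⟩
    -- the minimal sum
    have hsmin : ∀ t, t < Nat.find hex → ¬ Q t := fun t ht => Nat.find_min hex ht
    -- Vieta jump
    have hKz : z < k * x * y := by
      have hx2 : 0 < x ^ 2 := pow_pos hx 2
      have hy2 : 0 < y ^ 2 := pow_pos hy 2
      have hlt : z * z < (k * x * y) * z := by nlinarith [heq]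
      exact lt_of_mul_lt_mul_right hlt (Nat.zero_le z)
    set d : ℕ := k * x * y - z with hddef
    have hd : d + z = k * x * y := by omega
    have hZ : (x : ℤ) ^ 2 + (y : ℤ) ^ 2 + (z : ℤ) ^ 2 = (k : ℤ) * x * y * z := by
      exact_mod_cast heq
    have hdZ : (d : ℤ) + z = (k : ℤ) * x * y := by exact_mod_cast hd
    have hdeq : x ^ 2 + y ^ 2 + d ^ 2 = k * x * y * d := by
      have : (x : ℤ) ^ 2 + (y : ℤ) ^ 2 + (d : ℤ) ^ 2 = (k : ℤ) * x * y * d := by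
        linear_combination hZ + ((d : ℤ) - z) * hdZ
      exact_mod_cast this
    have hdpos : 0 < d := by
      rcases Nat.eq_zero_or_pos d with h0 | hp
      · rw [h0] at hdeq
        have hx2 : 0 < x ^ 2 := pow_pos hx 2
        have : x ^ 2 + y ^ 2 + 0 ^ 2 = k * x * y * 0 := hdeq
        simp at this
        omega
      · exact hp
    -- minimality gives z ≤ d
    have hQd : Q (x + y + d) := ⟨x, y, d, hx, hy, hdpos, hdeq, rfl⟩
    have hzd : z ≤ d := by
      by_contra hcon
      have hlt : x + y + d < Nat.find hex := by omega
      exact hsmin _ hlt hQd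
    -- z^2 ≤ x^2 + y^2
    have hzdint : (z : ℤ) * d = (x : ℤ) ^ 2 + (y : ℤ) ^ 2 := by
      linear_combination (z : ℤ) * hdZ - hZ
    have hzdnat : z * d = x ^ 2 + y ^ 2 := by exact_mod_cast hzdint
    have hz2 : z ^ 2 ≤ x ^ 2 + y ^ 2 := by
      calc z ^ 2 = z * z := sq z
        _ ≤ z * d := Nat.mul_le_mul_left z hzd
        _ = x ^ 2 + y ^ 2 := hzdnat
    -- k * x ≤ 4
    have hxy2 : x ^ 2 ≤ y ^ 2 := Nat.pow_le_pow_left hxy 2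
    have hy2z : y ^ 2 ≤ y * z := by
      calc y ^ 2 = y * y := sq y
        _ ≤ y * z := Nat.mul_le_mul_left y hyz
    have hassoc : k * x * (y * z) = k * x * y * z := by ring
    have hkey : k * x * (y * z) ≤ 4 * (y * z) := by linarith [heq, hz2, hxy2, hy2z, hassoc]
    have hkx : k * x ≤ 4 := by
      have hyz0 : 0 < y * z := Nat.mul_pos hy hz
      exact Nat.le_of_mul_le_mul_right hkey hyz0
    have : k ≤ k * x := Nat.le_mul_of_pos_right k hx
    omega
  · rintro (rfl | rfl)
    · exact ⟨3, 3, 3, by norm_num, by norm_num, by norm_num, by norm_num⟩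
    · exact ⟨1, 1, 1, by norm_num, by norm_num, by norm_num, by norm_num⟩
end

section
/- The Diophantine equation x₂⁴ + x₁² + 2x₁ + 1 = k·x₁·x₂² has a positive integer solution (x₁, x₂) if and only if k = 5. -/
set_option maxHeartbeats 2000000 in
lemma core : ∀ n : ℕ, ∀ x y k : ℕ, x + y = n → 0 < x → x ≤ y → 2 ≤ x * y →
    x ^ 2 + y ^ 2 = k * (x * y - 1) → k = 5 := by
  intro n
  induction n using Nat.strong_induction_on with
  | _ n ih =>
    intro x y k hn hx hxy hxy2 heq
    have hy : 0 < y := lt_of_lt_of_le hx hxy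
    have hxy1 : 1 ≤ x * y := le_trans (by norm_num) hxy2
    have hk : 1 ≤ k := by
      rcases Nat.eq_zero_or_pos k with h | h
      · subst h; simp at heq; nlinarith
      · exact h
    have heqZ : (x : ℤ) ^ 2 + (y : ℤ) ^ 2 = (k : ℤ) * ((x : ℤ) * y - 1) := by
      zify [hxy1] at heq
      linarith
    rcases eq_or_lt_of_le (show 1 ≤ x from hx) with hx1 | hx2
    · -- x = 1
      have hx1' : x = 1 := hx1.symm
      subst hx1'
      have hy2 : 2 ≤ y := by omega
      obtain ⟨z, hz⟩ : ∃ z, y = z + 1 := ⟨y - 1, by omega⟩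
      subst hz
      have hz1 : 1 ≤ z := by omega
      have heq' : z ^ 2 + 2 * z + 2 = k * z := by
        have : 1 * (z + 1) - 1 = z := by omega
        rw [this] at heq
        nlinarith [heq]
      have hd : z ∣ 2 := by
        have h1 : z ∣ z ^ 2 + 2 * z + 2 := heq' ▸ Dvd.intro k (by ring)
        have h2 : z ∣ z ^ 2 + 2 * z := ⟨z + 2, by ring⟩
        have := Nat.dvd_sub h1 h2
        simpa using this
      have hz2 : z ≤ 2 := Nat.le_of_dvd (by norm_num) hd
      interval_cases z <;> omega
    · -- 2 ≤ x
      have hZx : (2 : ℤ) ≤ (x : ℤ) := by exact_mod_cast hx2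
      have hZxy : (x : ℤ) ≤ (y : ℤ) := by exact_mod_cast hxy
      have hZy : (1 : ℤ) ≤ (y : ℤ) := by exact_mod_cast hy
      have hZk : (1 : ℤ) ≤ (k : ℤ) := by exact_mod_cast hk
      -- k*x - y > 0
      have hmul : ((k : ℤ) * x - y) * y = (x : ℤ) ^ 2 + k := by nlinarith [heqZ]
      have hpos : (0 : ℤ) < (k : ℤ) * x - y := by
        by_contra h
        push_neg at h
        nlinarith [hmul]
      have hlt : y < k * x := by
        have : (y : ℤ) < (k : ℤ) * x := by linarith
        exact_mod_cast this
      set y' := k * x - y with hy'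
      have hy'Z : (y' : ℤ) = (k : ℤ) * x - y := by
        push_cast [hy']
        omega
      have hy'pos : 0 < y' := by omega
      have h2Z : (x : ℤ) ^ 2 + (y' : ℤ) ^ 2 = (k : ℤ) * ((x : ℤ) * y' - 1) := by
        rw [hy'Z]
        linear_combination heqZ
      rcases lt_or_ge y' y with hlt' | hge
      · -- descent
        have hxy'1 : 1 ≤ x * y' := Nat.one_le_iff_ne_zero.mpr (by positivity)
        have h2 : x ^ 2 + y' ^ 2 = k * (x * y' - 1) := by
          zify [hxy'1]
          linarith [h2Z]
        have hxy'2 : 2 ≤ x * y' := by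
          calc 2 ≤ x * 1 := by omega
          _ ≤ x * y' := Nat.mul_le_mul_left x hy'pos
        rcases le_total x y' with ho | ho
        · exact ih (x + y') (by omega) x y' k rfl hx ho hxy'2 h2
        · exact ih (y' + x) (by omega) y' x k rfl hy'pos ho
            (by rwa [Nat.mul_comm]) (by rw [Nat.mul_comm y' x]; linarith [h2])
      · -- y ≤ y' : bounded case
        have hgeZ : (y : ℤ) ≤ (y' : ℤ) := by exact_mod_cast hge
        have hge' : (y : ℤ) ≤ (k : ℤ) * x - y := by linarith [hy'Z, hgeZ]
        have hy0 : (0 : ℤ) ≤ (y : ℤ) := by linarith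
        have hb : (y : ℤ) ^ 2 ≤ (x : ℤ) ^ 2 + k := by
          calc (y : ℤ) ^ 2 = (y : ℤ) * y := by ring
            _ ≤ ((k : ℤ) * x - y) * y := mul_le_mul_of_nonneg_right hge' hy0
            _ = (x : ℤ) ^ 2 + k := hmul
        have hy2Z : (2 : ℤ) ≤ (y : ℤ) := le_trans hZx hZxy
        have hxy4 : (4 : ℤ) ≤ (x : ℤ) * y := by
          calc (4 : ℤ) = 2 * 2 := by norm_num
            _ ≤ (x : ℤ) * y := mul_le_mul hZx hy2Z (by norm_num) (by linarith)
        have hprod : ((k : ℤ) - 2) * ((x : ℤ) * y - 1) = ((x : ℤ) - y) ^ 2 + 2 := by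
          linear_combination -heqZ
        have hk3 : (3 : ℤ) ≤ (k : ℤ) := by
          by_contra h
          push_neg at h
          have h5 : ((k : ℤ) - 2) * ((x : ℤ) * y - 1) ≤ 0 :=
            mul_nonpos_of_nonpos_of_nonneg (by linarith) (by linarith)
          linarith only [hprod, sq_nonneg ((x : ℤ) - y), h5]
        have hxx : (x : ℤ) ^ 2 ≤ (x : ℤ) * y := by
          calc (x : ℤ) ^ 2 = (x : ℤ) * x := by ring
            _ ≤ (x : ℤ) * y := mul_le_mul_of_nonneg_left hZxy (by linarith)
        have hxy6 : (x : ℤ) * y ≤ 6 := by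
          have h1 : (0 : ℤ) ≤ ((k : ℤ) - 3) * ((x : ℤ) * y - 2) :=
            mul_nonneg (by linarith) (by linarith)
          linarith only [heqZ, hb, h1, hxx]
        have hx2' : x = 2 := by
          have h3 : (x : ℤ) ≤ 2 := by
            by_contra h
            push_neg at h
            have h4 : (3 : ℤ) ≤ (x : ℤ) := by linarith
            have h5 : (3 : ℤ) * 3 ≤ (x : ℤ) * x := mul_le_mul h4 h4 (by norm_num) (by linarith)
            linarith only [hxy6, hxx, h5]
          have : x ≤ 2 := by exact_mod_cast h3
          omega
        have hy3 : y ≤ 3 := by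
          have hx2Z : (x : ℤ) = 2 := by rw [hx2']; norm_num
          rw [hx2Z] at hxy6
          have : (y : ℤ) ≤ 3 := by linarith only [hxy6]
          exact_mod_cast this
        subst hx2'
        interval_cases y <;> omega

theorem stmt_2 (k : ℕ) :
    (∃ x₁ x₂ : ℕ, 0 < x₁ ∧ 0 < x₂ ∧
      x₂ ^ 4 + x₁ ^ 2 + 2 * x₁ + 1 = k * x₁ * x₂ ^ 2) ↔ k = 5 := by
  constructor
  · rintro ⟨x₁, x₂, h1, h2, heq⟩
    have hsq : 0 < x₂ ^ 2 := by positivity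
    have hle : x₂ ^ 2 ≤ k * x₁ := by
      by_contra h
      push_neg at h
      nlinarith [heq]
    obtain ⟨c, hc⟩ : ∃ c, k * x₁ = x₂ ^ 2 + c := ⟨k * x₁ - x₂ ^ 2, by omega⟩
    have hkey : x₁ ^ 2 + 2 * x₁ + 1 = c * x₂ ^ 2 := by nlinarith [heq, hc]
    have hdvd : x₂ ^ 2 ∣ (x₁ + 1) ^ 2 := ⟨c, by nlinarith [hkey]⟩
    have hdvd2 : x₂ ∣ x₁ + 1 := (Nat.pow_dvd_pow_iff (by norm_num)).mp hdvd
    obtain ⟨m, hm⟩ := hdvd2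
    have hm1 : 0 < m := by
      rcases Nat.eq_zero_or_pos m with h | h
      · subst h; omega
      · exact h
    have hmx : 2 ≤ x₂ * m := by omega
    have key : (x₂ ^ 2 + m ^ 2) * x₂ ^ 2 = (k * x₁) * x₂ ^ 2 := by nlinarith [heq, hm]
    have key2 : x₂ ^ 2 + m ^ 2 = k * x₁ := Nat.eq_of_mul_eq_mul_right hsq key
    have hx1 : x₂ * m - 1 = x₁ := by omega
    have key3 : x₂ ^ 2 + m ^ 2 = k * (x₂ * m - 1) := by rw [hx1]; exact key2
    rcases le_total x₂ m with ho | ho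
    · exact core (x₂ + m) x₂ m k rfl h2 ho hmx key3
    · exact core (m + x₂) m x₂ k rfl hm1 ho (by rwa [Nat.mul_comm])
        (by rw [Nat.mul_comm m x₂]; linarith [key3])
  · rintro rfl
    exact ⟨2, 1, by norm_num⟩
end

section
/- The Diophantine equation x₁² + x₂⁴ + x₃⁴ + 2x₁x₂² + 2x₁x₃² = k·x₁·x₂²·x₃² has a positive integer solution (x₁, x₂, x₃) if and only if k = 7. -/
set_option maxHeartbeats 1000000 in
lemma min_case : ∀ k x y z t : ℤ, 1 ≤ k → 1 ≤ x → 1 ≤ z → z ≤ y →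
    t * y * z = x + y ^ 2 + z ^ 2 → t ^ 2 = k * x + 2 →
    y ^ 2 ≤ x + z ^ 2 → x ≤ y ^ 2 + z ^ 2 → k = 7 := by
  intro k x y z t hk hx hz hzy heq ht2 hA hC
  have hy : 1 ≤ y := le_trans hz hzy
  by_cases hy1 : y = 1
  · -- base case y = z = 1
    have hz1 : z = 1 := le_antisymm (hy1 ▸ hzy) hz
    subst hy1; subst hz1
    have hkey : x * (k - x - 4) = 2 := by linear_combination -ht2 + (t + x + 2) * heq
    have hpos : 1 ≤ k - x - 4 := by nlinarith
    have hx2 : x ≤ 2 := by nlinarith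
    interval_cases x <;> omega
  · -- y ≥ 2 : derive False
    exfalso
    have hy2 : 2 ≤ y := by omega
    obtain ⟨s, hs⟩ : ∃ s : ℤ, s = t * z - 2 * y := ⟨_, rfl⟩
    have hxval : x = y ^ 2 + s * y - z ^ 2 := by linear_combination -heq - y * hs
    have hs0 : 0 ≤ s := by nlinarith
    have hsy : s * y ≤ 2 * z ^ 2 := by nlinarith
    have hq : (k * z ^ 2 - 4) * x = s ^ 2 + 2 * z ^ 2 := by
      linear_combination (-(z ^ 2)) * ht2 + 4 * heq - (t * z - 2 * y + s) * hs
    have hq1 : 1 ≤ k * z ^ 2 - 4 := by nlinarith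
    subst hxval
    clear hs heq ht2 hA hC hy1
    clear t
    rcases eq_or_lt_of_le hs0 with hs0' | hspos
    · -- s = 0
      have hs0'' : s = 0 := hs0'.symm
      subst hs0''
      have h8 : (k * z ^ 2 - 4) * (k * (y ^ 2 + 0 * y - z ^ 2) - 2) = 8 := by
        linear_combination k * hq
      have hkx : 1 ≤ k * (y ^ 2 + 0 * y - z ^ 2) - 2 := by nlinarith
      have hkx8 : k * (y ^ 2 + 0 * y - z ^ 2) - 2 ≤ 8 := by nlinarith
      have hz3 : z ≤ 3 := by nlinarith
      have hxb : y ^ 2 + 0 * y - z ^ 2 ≤ 10 := by nlinarith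
      have hyb : y ≤ 4 := by nlinarith
      interval_cases z <;> interval_cases y <;> (ring_nf at hq hx <;> omega)
    · -- s ≥ 1
      have hs1 : 1 ≤ s := hspos
      have hxsy : s * y ≤ y ^ 2 + s * y - z ^ 2 := by
        linarith [mul_self_le_mul_self (by linarith : (0:ℤ) ≤ z) hzy]
      have e1 : s * y * s ≤ 2 * z ^ 2 * s := mul_le_mul_of_nonneg_right hsy hs0
      have e2 : (k * z ^ 2 - 4) * (s * y) ≤ (k * z ^ 2 - 4) * (y ^ 2 + s * y - z ^ 2) :=
        mul_le_mul_of_nonneg_left hxsy (by linarith)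
      have e3 : (k * z ^ 2 - 4) * (s * y) * y ≤ (s ^ 2 + 2 * z ^ 2) * y := by
        calc (k * z ^ 2 - 4) * (s * y) * y
            ≤ (k * z ^ 2 - 4) * (y ^ 2 + s * y - z ^ 2) * y :=
              mul_le_mul_of_nonneg_right e2 (by linarith)
          _ = (s ^ 2 + 2 * z ^ 2) * y := by rw [hq]
      have e4 : (s ^ 2 + 2 * z ^ 2) * y ≤ 2 * z ^ 2 * s + 2 * z ^ 2 * y := by
        have e1' : s ^ 2 * y ≤ 2 * z ^ 2 * s := by nlinarith [e1]
        nlinarith [e1']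
      have e5 : 2 * z ^ 2 * s ≤ 2 * y ^ 2 * s :=
        by linarith [mul_le_mul_of_nonneg_right (mul_self_le_mul_self (by linarith : (0:ℤ) ≤ z) hzy) hs0]
      have e6 : 2 * z ^ 2 * y ≤ 2 * z * y ^ 2 := by
        linarith [mul_nonneg (mul_nonneg (by linarith : (0:ℤ) ≤ z) (by linarith : (0:ℤ) ≤ y)) (by linarith : (0:ℤ) ≤ y - z)]
      have e7 : 2 * z * y ^ 2 ≤ 2 * z * s * y ^ 2 := by
        have h7 : (0:ℤ) ≤ 2 * z * y ^ 2 * (s - 1) :=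
          mul_nonneg (by positivity) (by linarith)
        linarith [h7]
      have hqb : k * z ^ 2 - 4 ≤ 2 + 2 * z := by
        have hcancel : (k * z ^ 2 - 4) * (s * y ^ 2) ≤ (2 + 2 * z) * (s * y ^ 2) := by
          nlinarith [e3, e4, e5, e6, e7, hs1, hy2, hz]
        have hsy2 : (0:ℤ) < s * y ^ 2 := by positivity
        exact le_of_mul_le_mul_right hcancel hsy2
      have hz3 : z ≤ 3 := by
        nlinarith [mul_nonneg (by linarith : (0:ℤ) ≤ k - 1) (sq_nonneg z)]
      have hxq : y ^ 2 + s * y - z ^ 2 ≤ s ^ 2 + 2 * z ^ 2 := by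
        have h1 : (y ^ 2 + s * y - z ^ 2) * 1 ≤ (y ^ 2 + s * y - z ^ 2) * (k * z ^ 2 - 4) :=
          mul_le_mul_of_nonneg_left hq1 (by linarith)
        nlinarith [h1, hq]
      have hy2z : y ≤ 2 * z := by
        by_contra hcon
        push_neg at hcon
        have hy' : 2 * z + 1 ≤ y := hcon
        have hsz : s ≤ z - 1 := by
          nlinarith [mul_le_mul_of_nonneg_left hy' hs0]
        nlinarith [mul_le_mul_of_nonneg_left hy' hs0, mul_self_le_mul_self hs0 (by linarith : s ≤ z - 1), mul_self_le_mul_self (by linarith : (0:ℤ) ≤ 2 * z + 1) hy', mul_le_mul_of_nonneg_right hy' (by linarith : (0:ℤ) ≤ s)]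
      have hsb : s ≤ 2 * z ^ 2 := by nlinarith
      interval_cases z <;> interval_cases y <;> interval_cases s <;> (ring_nf at hq <;> omega)


set_option maxHeartbeats 1000000 in
lemma key_descent (k : ℤ)
    (hmin : ∀ x y z t : ℤ, 1 ≤ k → 1 ≤ x → 1 ≤ z → z ≤ y →
      t * y * z = x + y ^ 2 + z ^ 2 → t ^ 2 = k * x + 2 →
      y ^ 2 ≤ x + z ^ 2 → x ≤ y ^ 2 + z ^ 2 → k = 7) :
    ∀ n : ℕ, ∀ x y z t : ℤ, 1 ≤ x → 1 ≤ y → 1 ≤ z → 1 ≤ t →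
    x + y + z + t ≤ (n : ℤ) →
    t * y * z = x + y ^ 2 + z ^ 2 → t ^ 2 = k * x + 2 → k = 7 := by
  intro n
  induction n with
  | zero => intro x y z t hx hy hz ht hn _ _; norm_num at hn; omega
  | succ n ih =>
    intro x y z t hx hy hz ht hn heq ht2
    -- k ≥ 1
    have hk : 1 ≤ k := by
      by_contra hcon
      push_neg at hcon
      have hk0 : k ≤ 0 := by omega
      have hkx : k * x ≤ 0 := mul_nonpos_of_nonpos_of_nonneg hk0 (by linarith)
      have ht2' : t ^ 2 ≤ 2 := by linarith
      have ht1 : t = 1 := by nlinarith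
      rw [ht1] at heq
      nlinarith [sq_nonneg (y - z), mul_pos (by linarith : (0:ℤ) < y) (by linarith : (0:ℤ) < z)]
    -- y-jump
    have hyy' : y * (t * z - y) = x + z ^ 2 := by linear_combination heq
    have hy'pos : 1 ≤ t * z - y := by
      by_contra hcon
      push_neg at hcon
      have : y * (t * z - y) ≤ 0 := mul_nonpos_of_nonneg_of_nonpos (by linarith) (by linarith)
      nlinarith
    by_cases hy' : t * z - y < y
    · refine ih x (t * z - y) z t hx hy'pos hz ht (by push_cast at hn ⊢; omega) ?_ ht2
      linear_combination heq
    · push_neg at hy'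
      -- z-jump
      have hzz' : z * (t * y - z) = x + y ^ 2 := by linear_combination heq
      have hz'pos : 1 ≤ t * y - z := by
        by_contra hcon
        push_neg at hcon
        have : z * (t * y - z) ≤ 0 := mul_nonpos_of_nonneg_of_nonpos (by linarith) (by linarith)
        nlinarith
      by_cases hz' : t * y - z < z
      · refine ih x y (t * y - z) t hx hy hz'pos ht (by push_cast at hn ⊢; omega) ?_ ht2
        linear_combination heq
      · push_neg at hz'
        -- x-jump
        obtain ⟨x', hx'⟩ : ∃ x' : ℤ, x' = (k * y * z - t) * y * z - y ^ 2 - z ^ 2 := ⟨_, rfl⟩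
        have horig : (x + y ^ 2 + z ^ 2) ^ 2 = (k * x + 2) * (y ^ 2 * z ^ 2) := by
          linear_combination (-(t * y * z + x + y ^ 2 + z ^ 2)) * heq + y ^ 2 * z ^ 2 * ht2
        have hx'eq : x' = k * y ^ 2 * z ^ 2 - x - 2 * y ^ 2 - 2 * z ^ 2 := by
          linear_combination hx' - heq
        have hxx' : x * x' = y ^ 4 + z ^ 4 := by
          linear_combination x * hx'eq - horig
        have hx'pos : 1 ≤ x' := by
          by_contra hcon
          push_neg at hcon
          have : x * x' ≤ 0 := mul_nonpos_of_nonneg_of_nonpos (by linarith) (by linarith)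
          nlinarith [pow_pos (by linarith : (0:ℤ) < y) 4, pow_pos (by linarith : (0:ℤ) < z) 4]
        have ht'eq : (k * y * z - t) * y * z = x' + y ^ 2 + z ^ 2 := by linear_combination -hx'
        have ht'pos : 1 ≤ k * y * z - t := by
          by_contra hcon
          push_neg at hcon
          have h1 : (k * y * z - t) * (y * z) ≤ 0 :=
            mul_nonpos_of_nonpos_of_nonneg (by linarith)
              (by positivity)
          nlinarith [h1, ht'eq]
        have ht'2 : (k * y * z - t) ^ 2 = k * x' + 2 := by
          linear_combination ht2 - k * heq - k * hx'
        by_cases hxx : x' < x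
        · have ht' : k * y * z - t < t := by
            by_contra hcon2
            push_neg at hcon2
            have h1 : t ^ 2 ≤ (k * y * z - t) ^ 2 := by
              nlinarith [mul_self_le_mul_self (by linarith : (0:ℤ) ≤ t) hcon2]
            have h2 : k * x' < k * x := mul_lt_mul_of_pos_left hxx (by linarith)
            linarith
          refine ih x' y z (k * y * z - t) hx'pos hy hz ht'pos (by push_cast at hn ⊢; omega) ?_ ht'2
          linear_combination ht'eq
        · push_neg at hxx
          -- minimal case
          have hA : y ^ 2 ≤ x + z ^ 2 := by
            nlinarith [mul_le_mul_of_nonneg_left hy' (by linarith : (0:ℤ) ≤ y)]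
          have hB : z ^ 2 ≤ x + y ^ 2 := by
            nlinarith [mul_le_mul_of_nonneg_left hz' (by linarith : (0:ℤ) ≤ z)]
          have hC : x ≤ y ^ 2 + z ^ 2 := by
            by_contra hcon
            push_neg at hcon
            have h1 : x * x ≤ x * x' := mul_le_mul_of_nonneg_left hxx (by linarith)
            nlinarith [mul_pos (mul_pos (by linarith : (0:ℤ) < y) (by linarith : (0:ℤ) < y)) (mul_pos (by linarith : (0:ℤ) < z) (by linarith : (0:ℤ) < z))]
          rcases le_total z y with hzy | hyz
          · exact hmin x y z t hk hx hz hzy heq ht2 hA hC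
          · refine hmin x z y t hk hx hy hyz ?_ ht2 hB (by linarith)
            linear_combination heq

theorem stmt_3 (k : ℕ) :
    (∃ x₁ x₂ x₃ : ℕ, 0 < x₁ ∧ 0 < x₂ ∧ 0 < x₃ ∧
      x₁ ^ 2 + x₂ ^ 4 + x₃ ^ 4 + 2 * x₁ * x₂ ^ 2 + 2 * x₁ * x₃ ^ 2
        = k * x₁ * x₂ ^ 2 * x₃ ^ 2) ↔ k = 7 := by
  constructor
  · rintro ⟨x, y, z, hx, hy, hz, heq⟩
    have hxZ : (1:ℤ) ≤ (x:ℤ) := by exact_mod_cast hx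
    have hyZ : (1:ℤ) ≤ (y:ℤ) := by exact_mod_cast hy
    have hzZ : (1:ℤ) ≤ (z:ℤ) := by exact_mod_cast hz
    have heqZ : (x:ℤ) ^ 2 + (y:ℤ) ^ 4 + (z:ℤ) ^ 4 + 2 * x * (y:ℤ) ^ 2 + 2 * x * (z:ℤ) ^ 2
        = (k:ℤ) * x * (y:ℤ) ^ 2 * (z:ℤ) ^ 2 := by exact_mod_cast heq
    have hu2 : ((x:ℤ) + y ^ 2 + z ^ 2) ^ 2 = ((y:ℤ) * z) ^ 2 * ((k:ℤ) * x + 2) := by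
      linear_combination heqZ
    have hdvd : ((y:ℤ) * z) ^ 2 ∣ ((x:ℤ) + y ^ 2 + z ^ 2) ^ 2 := ⟨(k:ℤ) * x + 2, hu2⟩
    have hyz : ((y:ℤ) * z) ∣ ((x:ℤ) + y ^ 2 + z ^ 2) :=
      (Int.pow_dvd_pow_iff two_ne_zero).mp hdvd
    obtain ⟨t, htdef⟩ := hyz
    have htpos : 1 ≤ t := by
      by_contra hcon
      push_neg at hcon
      have h1 : (y:ℤ) * z * t ≤ 0 :=
        mul_nonpos_of_nonneg_of_nonpos (by positivity) (by linarith)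
      nlinarith [sq_nonneg ((y:ℤ)), sq_nonneg ((z:ℤ))]
    have ht2 : t ^ 2 = (k:ℤ) * x + 2 := by
      rw [htdef, mul_pow] at hu2
      exact mul_left_cancel₀ (pow_ne_zero 2 (by positivity)) hu2
    have heqt : t * (y:ℤ) * z = (x:ℤ) + y ^ 2 + z ^ 2 := by linear_combination -htdef
    have h7 : (k:ℤ) = 7 :=
      key_descent (k:ℤ) (min_case (k:ℤ)) ((x:ℤ) + y + z + t).toNat x y z t
        hxZ hyZ hzZ htpos (by exact_mod_cast Int.self_le_toNat _) heqt ht2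
    exact_mod_cast h7
  · rintro rfl
    exact ⟨1, 1, 1, one_pos, one_pos, one_pos, by norm_num⟩
end

section
/- A positive integer triple (a₁, a₂, a₃) satisfies a₁² + a₂² + a₃² = a₁·a₂·a₃ if and only if 3 divides each aᵢ and (a₁/3, a₂/3, a₃/3) satisfies x₁² + x₂² + x₃² = 3·x₁·x₂·x₃. -/
lemma zmod3_aux : ∀ x y z : ZMod 3, x ^ 2 + y ^ 2 + z ^ 2 = x * y * z →
    x = 0 ∧ y = 0 ∧ z = 0 := by decide

theorem stmt_4 (a₁ a₂ a₃ : ℕ) (h₁ : 0 < a₁) (h₂ : 0 < a₂) (h₃ : 0 < a₃) :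
    a₁ ^ 2 + a₂ ^ 2 + a₃ ^ 2 = a₁ * a₂ * a₃ ↔
      (3 ∣ a₁ ∧ 3 ∣ a₂ ∧ 3 ∣ a₃ ∧
        (a₁ / 3) ^ 2 + (a₂ / 3) ^ 2 + (a₃ / 3) ^ 2
          = 3 * (a₁ / 3) * (a₂ / 3) * (a₃ / 3)) := by
  constructor
  · intro h
    have hz : (a₁ : ZMod 3) ^ 2 + (a₂ : ZMod 3) ^ 2 + (a₃ : ZMod 3) ^ 2
        = (a₁ : ZMod 3) * a₂ * a₃ := by exact_mod_cast congrArg (Nat.cast : ℕ → ZMod 3) h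
    obtain ⟨e1, e2, e3⟩ := zmod3_aux _ _ _ hz
    have d1 : 3 ∣ a₁ := (ZMod.natCast_eq_zero_iff a₁ 3).mp e1
    have d2 : 3 ∣ a₂ := (ZMod.natCast_eq_zero_iff a₂ 3).mp e2
    have d3 : 3 ∣ a₃ := (ZMod.natCast_eq_zero_iff a₃ 3).mp e3
    obtain ⟨x, rfl⟩ := d1; obtain ⟨y, rfl⟩ := d2; obtain ⟨z, rfl⟩ := d3
    refine ⟨⟨x, rfl⟩, ⟨y, rfl⟩, ⟨z, rfl⟩, ?_⟩
    rw [Nat.mul_div_cancel_left x (by norm_num), Nat.mul_div_cancel_left y (by norm_num),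
        Nat.mul_div_cancel_left z (by norm_num)]
    have : 9 * (x ^ 2 + y ^ 2 + z ^ 2) = 9 * (3 * x * y * z) := by ring_nf; ring_nf at h; linarith
    omega
  · rintro ⟨⟨x, rfl⟩, ⟨y, rfl⟩, ⟨z, rfl⟩, h⟩
    rw [Nat.mul_div_cancel_left x (by norm_num), Nat.mul_div_cancel_left y (by norm_num),
        Nat.mul_div_cancel_left z (by norm_num)] at h
    ring_nf
    ring_nf at h
    nlinarith [h]
end

section
/- For every natural number k ≥ 4, if (a, b) is a positive integer solution of x₁² + x₂² + 1 = k·x₁·x₂ with a ≥ b, then b ≥ 2; moreover ((b²+1)/a, b) is again a positive integer solution and (b²+1)/a < b. -/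
theorem stmt_5 (k a b : ℕ) (hk : 4 ≤ k) (ha : 0 < a) (hb : 0 < b)
    (heq : a ^ 2 + b ^ 2 + 1 = k * a * b) (hab : a ≥ b) :
    2 ≤ b ∧ a ∣ b ^ 2 + 1 ∧ 0 < (b ^ 2 + 1) / a ∧
      ((b ^ 2 + 1) / a) ^ 2 + b ^ 2 + 1 = k * ((b ^ 2 + 1) / a) * b ∧
      (b ^ 2 + 1) / a < b := by
  -- b ≥ 2
  have hb2 : 2 ≤ b := by
    by_contra h
    have hb1 : b = 1 := by omega
    subst hb1
    have h2 : a ^ 2 + 2 = k * a := by omega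
    have hdvd : a ∣ 2 := by
      have : a ∣ a ^ 2 + 2 := h2 ▸ ⟨k, by ring⟩
      have h' : a ∣ a ^ 2 := ⟨a, by ring⟩
      exact (Nat.dvd_add_right h').mp this
    have := Nat.le_of_dvd (by norm_num) hdvd
    interval_cases a <;> omega
  have halt : a < k * b := by nlinarith
  set c := k * b - a with hc
  have hsum : c + a = k * b := by omega
  have hac : a * c = b ^ 2 + 1 := by
    have : a * c + a * a = a * (k * b) := by
      rw [← Nat.mul_add, hsum]
    nlinarith
  have hdvd : a ∣ b ^ 2 + 1 := ⟨c, hac.symm⟩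
  have hdiv : (b ^ 2 + 1) / a = c := by
    rw [← hac, Nat.mul_div_cancel_left _ ha]
  rw [hdiv]
  have hcpos : 0 < c := by nlinarith
  have hmain : c ^ 2 + b ^ 2 + 1 = k * c * b := by
    have h1 : c ^ 2 + a * c = c * (k * b) := by
      rw [← hsum]; ring
    nlinarith
  have hcb : c < b := by
    by_contra h
    push_neg at h
    rcases eq_or_lt_of_le h with h' | h'
    · -- c = b
      have : a * b = b ^ 2 + 1 := by rw [← h'] at hac; exact hac
      have hb1 : b ∣ 1 := by
        have : b ∣ b ^ 2 + 1 := ⟨a, by linarith [this]⟩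
        have h'' : b ∣ b ^ 2 := ⟨b, by ring⟩
        exact (Nat.dvd_add_right h'').mp this
      have := Nat.le_of_dvd one_pos hb1
      omega
    · -- c ≥ b + 1
      have : a * c ≥ a * (b + 1) := Nat.mul_le_mul_left a h'
      nlinarith
  exact ⟨hb2, hdvd, hcpos, hmain, hcb⟩
end

section
/- There is no positive integer solution of x₂⁴ + x₁² + 2x₁ + 1 = 3·x₁·x₂². -/
theorem stmt_8 :
    ¬ ∃ x₁ x₂ : ℕ, 0 < x₁ ∧ 0 < x₂ ∧
      x₂ ^ 4 + x₁ ^ 2 + 2 * x₁ + 1 = 3 * x₁ * x₂ ^ 2 := by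
  rintro ⟨x₁, x₂, h1, h2, h⟩
  -- move to ℤ
  have hz : (x₂ : ℤ) ^ 4 + (x₁ : ℤ) ^ 2 + 2 * x₁ + 1 = 3 * x₁ * x₂ ^ 2 := by
    exact_mod_cast h
  set a : ℤ := (x₁ : ℤ) with ha
  set b : ℤ := (x₂ : ℤ) with hb
  have hbne : b ≠ 0 := by positivity
  have key : (2 * a + 2 - 3 * b ^ 2) ^ 2 = b ^ 2 * (5 * b ^ 2 - 12) := by
    nlinarith [hz]
  set k : ℤ := 2 * a + 2 - 3 * b ^ 2 with hk
  have hdvd : b ∣ k := by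
    have : b ^ 2 ∣ k ^ 2 := ⟨5 * b ^ 2 - 12, key⟩
    exact (Int.pow_dvd_pow_iff (two_ne_zero)).mp this
  obtain ⟨m, hm⟩ := hdvd
  have hm2 : m ^ 2 = 5 * b ^ 2 - 12 := by
    have h2' : b ^ 2 * m ^ 2 = b ^ 2 * (5 * b ^ 2 - 12) := by
      rw [← key, hm]; ring
    exact mul_left_cancel₀ (pow_ne_zero 2 hbne) h2'
  have h5 : ∀ y : ZMod 5, y ^ 2 ≠ 3 := by decide
  apply h5 (m : ZMod 5)
  have : ((m ^ 2 : ℤ) : ZMod 5) = ((5 * b ^ 2 - 12 : ℤ) : ZMod 5) := by rw [hm2]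
  push_cast at this
  rw [this]
  have h50 : (5 : ZMod 5) = 0 := by decide
  rw [h50]
  ring_nf
  decide
end

section
/- There is no positive integer solution of x₂⁴ + x₁² + 2x₁ + 1 = 4·x₁·x₂². -/
theorem stmt_9 :
    ¬ ∃ x₁ x₂ : ℕ, 0 < x₁ ∧ 0 < x₂ ∧
      x₂ ^ 4 + x₁ ^ 2 + 2 * x₁ + 1 = 4 * x₁ * x₂ ^ 2 := by
  rintro ⟨a, b, ha, hb, heq⟩
  -- move to integers
  have heqz : (b : ℤ) ^ 4 + (a : ℤ) ^ 2 + 2 * a + 1 = 4 * a * b ^ 2 := by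
    exact_mod_cast heq
  set t : ℤ := 2 * (a : ℤ) + 2 - 4 * (b : ℤ) ^ 2 with ht
  have key : t ^ 2 = (2 * (b : ℤ)) ^ 2 * (3 * (b : ℤ) ^ 2 - 4) := by ring_nf; nlinarith [heqz]
  have hdvd : (2 * (b : ℤ)) ∣ t := by
    have h2 : (2 * (b : ℤ)) ^ 2 ∣ t ^ 2 := ⟨_, key⟩
    exact (Int.pow_dvd_pow_iff (by norm_num)).mp h2
  obtain ⟨c, hc⟩ := hdvd
  have hbne : (2 * (b : ℤ)) ^ 2 ≠ 0 := by positivity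
  have hc2 : c ^ 2 = 3 * (b : ℤ) ^ 2 - 4 := by
    have : (2 * (b : ℤ)) ^ 2 * c ^ 2 = (2 * (b : ℤ)) ^ 2 * (3 * (b : ℤ) ^ 2 - 4) := by
      rw [← key, hc]; ring
    exact mul_left_cancel₀ hbne this
  -- reduce mod 3
  have hmod : ((c : ZMod 3)) ^ 2 = 2 := by
    have : ((c ^ 2 : ℤ) : ZMod 3) = ((3 * (b : ℤ) ^ 2 - 4 : ℤ) : ZMod 3) := by
      exact_mod_cast congrArg (Int.cast : ℤ → ZMod 3) hc2
    push_cast at this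
    rw [this]; ring_nf; simp [show ((3 : ZMod 3)) = 0 by decide]
    decide
  exact (by decide : ∀ z : ZMod 3, z ^ 2 ≠ 2) _ hmod
end

section
/- If k ≥ 6 and (a, b) is a positive integer solution of x₂⁴ + x₁² + 2x₁ + 1 = k·x₁·x₂² with a ≠ 1 and b ≠ 1, then a ≠ b², and: if a > b² then (b⁴+1)/a < b², while if a < b² then (b⁴+1)/a > b². -/
theorem stmt_12 (k a b : ℕ) (hk : 6 ≤ k) (ha : 0 < a) (hb : 0 < b)
    (ha1 : a ≠ 1) (hb1 : b ≠ 1)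
    (heq : b ^ 4 + a ^ 2 + 2 * a + 1 = k * a * b ^ 2) :
    a ≠ b ^ 2 ∧
      (a > b ^ 2 → (b ^ 4 + 1) / a < b ^ 2) ∧
      (a < b ^ 2 → (b ^ 4 + 1) / a > b ^ 2) := by
  have hb2 : 2 ≤ b := by omega
  have hdvdZ : (a : ℤ) ∣ (b : ℤ) ^ 4 + 1 := by
    refine ⟨(k : ℤ) * b ^ 2 - a - 2, ?_⟩
    have : ((b:ℤ) ^ 4 + a ^ 2 + 2 * a + 1 : ℤ) = k * a * b ^ 2 := by
      exact_mod_cast congrArg (Nat.cast : ℕ → ℤ) heq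
    ring_nf
    nlinarith [this]
  have hdvd : a ∣ b ^ 4 + 1 := by
    have := Int.ofNat_dvd.mp (by exact_mod_cast hdvdZ)
    exact_mod_cast this
  obtain ⟨c, hc⟩ := hdvd
  have hdivc : (b ^ 4 + 1) / a = c := by rw [hc, Nat.mul_div_cancel_left _ ha]
  have hcpos : 0 < c := by nlinarith
  refine ⟨?_, ?_, ?_⟩
  · intro h
    have : b ^ 2 ∣ 1 := by
      have h1 : b ^ 2 ∣ b ^ 4 + 1 := h ▸ ⟨c, hc⟩
      have h2 : b ^ 2 ∣ b ^ 4 := ⟨b ^ 2, by ring⟩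
      exact (Nat.dvd_add_right h2).mp h1
    have := Nat.le_of_dvd one_pos this
    nlinarith
  · intro h
    rw [hdivc]
    by_contra hlt
    push_neg at hlt
    nlinarith
  · intro h
    rw [hdivc]
    by_contra hlt
    push_neg at hlt
    nlinarith
end

section
/- If k ≥ 6 and (a, b) is a positive integer solution of x₂⁴ + x₁² + 2x₁ + 1 = k·x₁·x₂² with a ≠ 1 and b ≠ 1, then setting b' = (a+1)/b (a positive integer): if a > b² then (b')² > a, while if a < b² then (b')² < a. -/
theorem stmt_13 (k a b : ℕ) (hk : 6 ≤ k) (ha : 0 < a) (hb : 0 < b)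
    (ha1 : a ≠ 1) (hb1 : b ≠ 1)
    (heq : b ^ 4 + a ^ 2 + 2 * a + 1 = k * a * b ^ 2) :
    b ∣ a + 1 ∧ 0 < (a + 1) / b ∧
      (a > b ^ 2 → ((a + 1) / b) ^ 2 > a) ∧
      (a < b ^ 2 → ((a + 1) / b) ^ 2 < a) := by
  have hb2 : 2 ≤ b := by omega
  have hsq : (a + 1) ^ 2 + b ^ 4 = k * a * b ^ 2 := by
    have h : (a + 1) ^ 2 = a ^ 2 + 2 * a + 1 := by ring
    omega
  have hdvd2 : b ^ 2 ∣ (a + 1) ^ 2 := by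
    have h1 : b ^ 2 ∣ (a + 1) ^ 2 + b ^ 4 := ⟨k * a, by linarith [hsq]⟩
    have h4 : b ^ 2 ∣ b ^ 4 := ⟨b ^ 2, by ring⟩
    have := Nat.dvd_sub h1 h4
    simpa using this
  have hdvd : b ∣ a + 1 := (Nat.pow_dvd_pow_iff (by norm_num)).mp hdvd2
  obtain ⟨c, hbc⟩ := hdvd
  have hceq : (a + 1) / b = c := by rw [hbc]; exact Nat.mul_div_cancel_left c hb
  rw [hceq]
  have hcpos : 0 < c := by
    rcases Nat.eq_zero_or_pos c with h | h
    · rw [h, mul_zero] at hbc; omega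
    · exact h
  have hkey : b ^ 2 + c ^ 2 = k * a := by
    have h1 : b ^ 2 * (b ^ 2 + c ^ 2) = b ^ 2 * (k * a) := by
      have h2 : (a + 1) ^ 2 = b ^ 2 * c ^ 2 := by rw [hbc]; ring
      nlinarith [hsq]
    exact Nat.eq_of_mul_eq_mul_left (by positivity) h1
  refine ⟨⟨c, hbc⟩, hcpos, ?_, ?_⟩
  · intro hab
    nlinarith [hkey, hk, ha]
  · intro hab
    have hcb : c ≤ b := by nlinarith [hbc, hab]
    have hcne : c ≠ b := by
      intro h
      subst h
      nlinarith [hkey, hbc, hb2]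
    have hcb' : c + 1 ≤ b := by omega
    rcases Nat.lt_or_ge c 2 with h1 | h2
    · have hc1 : c = 1 := by omega
      subst hc1
      have hb3 : 3 ≤ b := by
        by_contra h
        have hbe : b = 2 := by omega
        subst hbe
        simp at hbc
        nlinarith [hkey]
      nlinarith
    · nlinarith [hbc, hcb', h2]
end
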